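/- arXiv:2602.22164 — 3 statements merged into one kernel-verified Lean document; each statement's English description precedes it below -/
import Mathlib

section
/- The first isodynamic center function, represented by φ₁₅(a,b,c) = a(√3(−a²+b²+c²) + 4·Area), is the cyclic-affine combination φ₁₅ = √3·φ₃ + 4·Area·φ₆ of the circumcenter function φ₃(a,b,c) = a(−a²+b²+c²) and the symmedian function φ₆(a,b,c) = a; consequently the corresponding triangle center X₁₅ equals (4√3·Area/(4√3·Area + a²+b²+c²))·X₃ + ((a²+b²+c²)/(4√3·Area + a²+b²+c²))·X₆, so X₃, X₆, X₁₅ are collinear. -/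
/-- `(a,b,c)` are the side lengths of a nondegenerate triangle. -/
def IsTriangle (a b c : ℝ) : Prop :=
  0 < a ∧ 0 < b ∧ 0 < c ∧ a < b + c ∧ b < c + a ∧ c < a + b

/-- The trace of a triangle center function. -/
def trace (ψ : ℝ → ℝ → ℝ → ℝ) (a b c : ℝ) : ℝ :=
  a * ψ a b c + b * ψ b c a + c * ψ c a b

/-- The triangle center associated to a triangle center function `ψ`. -/
noncomputable def centerPoint (ψ : ℝ → ℝ → ℝ → ℝ)
    (A B C : EuclideanSpace ℝ (Fin 2)) (a b c : ℝ) : EuclideanSpace ℝ (Fin 2) :=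
  (trace ψ a b c)⁻¹ • ((a * ψ a b c) • A + (b * ψ b c a) • B + (c * ψ c a b) • C)

/-- Heron's formula for the area of a triangle with side lengths `a`, `b`, `c`. -/
noncomputable def heronArea (a b c : ℝ) : ℝ :=
  (1 / 4) * Real.sqrt ((a + b + c) * (-a + b + c) * (a - b + c) * (a + b - c))

/-- Circumcenter function. -/
def φ₃ (a b c : ℝ) : ℝ := a * (-a ^ 2 + b ^ 2 + c ^ 2)

/-- Symmedian point function. -/
def φ₆ (a b c : ℝ) : ℝ := a

/-- First isodynamic center function. -/
noncomputable def φ₁₅ (a b c : ℝ) : ℝ :=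
  a * (Real.sqrt 3 * (-a ^ 2 + b ^ 2 + c ^ 2) + 4 * heronArea a b c)

theorem X15_on_brocard_axis (A B C : EuclideanSpace ℝ (Fin 2)) (a b c : ℝ)
    (ha : a = dist B C) (hb : b = dist C A) (hc : c = dist A B)
    (h : IsTriangle a b c) :
    (∀ x y z : ℝ,
      φ₁₅ x y z = Real.sqrt 3 * φ₃ x y z + (4 * heronArea x y z) * φ₆ x y z) ∧
    centerPoint φ₁₅ A B C a b c
      = (4 * Real.sqrt 3 * heronArea a b c /
          (4 * Real.sqrt 3 * heronArea a b c + (a ^ 2 + b ^ 2 + c ^ 2))) •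
          centerPoint φ₃ A B C a b c
        + ((a ^ 2 + b ^ 2 + c ^ 2) /
          (4 * Real.sqrt 3 * heronArea a b c + (a ^ 2 + b ^ 2 + c ^ 2))) •
          centerPoint φ₆ A B C a b c ∧
    Collinear ℝ
      ({centerPoint φ₃ A B C a b c, centerPoint φ₆ A B C a b c,
        centerPoint φ₁₅ A B C a b c} : Set (EuclideanSpace ℝ (Fin 2))) := by
  obtain ⟨ha0, hb0, hc0, h1, h2, h3⟩ := h
  have hpart1 : ∀ x y z : ℝ,
      φ₁₅ x y z = Real.sqrt 3 * φ₃ x y z + (4 * heronArea x y z) * φ₆ x y z := by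
    intro x y z; unfold φ₁₅ φ₃ φ₆; ring
  set S := heronArea a b c with hSdef
  have hScyc1 : heronArea b c a = S := by unfold heronArea S; congr 1; ring
  have hScyc2 : heronArea c a b = S := by unfold heronArea S; congr 1; ring
  have hP : 0 < (a + b + c) * (-a + b + c) * (a - b + c) * (a + b - c) := by
    have : 0 < a + b + c := by linarith
    apply mul_pos (mul_pos (mul_pos this (by linarith)) (by linarith)) (by linarith)
  have hSpos : 0 < S := by
    rw [hSdef, heronArea]
    have := Real.sqrt_pos.mpr hP
    linarith
  have hsq : S ^ 2 = (1/16) * ((a + b + c) * (-a + b + c) * (a - b + c) * (a + b - c)) := by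
    rw [hSdef, heronArea, mul_pow, Real.sq_sqrt hP.le]; ring
  have hP' : a^2*(-a^2+b^2+c^2) + b^2*(-b^2+c^2+a^2) + c^2*(-c^2+a^2+b^2) = 16 * S^2 := by
    rw [hsq]; ring
  have hT6 : (0:ℝ) < a^2+b^2+c^2 := by positivity
  have hs3 : (0:ℝ) < Real.sqrt 3 := by positivity
  have hD : (0:ℝ) < 4 * Real.sqrt 3 * S + (a^2+b^2+c^2) := by positivity
  have htr3 : trace φ₃ a b c = 16 * S^2 := by
    unfold trace φ₃; linear_combination hP'
  have htr6 : trace φ₆ a b c = a^2+b^2+c^2 := by unfold trace φ₆; ring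
  have htr15 : trace φ₁₅ a b c = 4 * S * (4 * Real.sqrt 3 * S + (a^2+b^2+c^2)) := by
    unfold trace φ₁₅
    rw [hScyc1, hScyc2]
    linear_combination Real.sqrt 3 * hP'
  have hSne : S ≠ 0 := ne_of_gt hSpos
  have hDne : 4 * Real.sqrt 3 * S + (a^2+b^2+c^2) ≠ 0 := ne_of_gt hD
  have hT6ne : (a^2+b^2+c^2 : ℝ) ≠ 0 := ne_of_gt hT6
  have hmid : centerPoint φ₁₅ A B C a b c
      = (4 * Real.sqrt 3 * S / (4 * Real.sqrt 3 * S + (a ^ 2 + b ^ 2 + c ^ 2))) •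
          centerPoint φ₃ A B C a b c
        + ((a ^ 2 + b ^ 2 + c ^ 2) / (4 * Real.sqrt 3 * S + (a ^ 2 + b ^ 2 + c ^ 2))) •
          centerPoint φ₆ A B C a b c := by
    unfold centerPoint
    rw [htr3, htr6, htr15]
    have hc15A : a * φ₁₅ a b c = Real.sqrt 3 * (a * φ₃ a b c) + 4 * S * (a * φ₆ a b c) := by
      unfold φ₁₅ φ₃ φ₆; ring
    have hc15B : b * φ₁₅ b c a = Real.sqrt 3 * (b * φ₃ b c a) + 4 * S * (b * φ₆ b c a) := by
      unfold φ₁₅ φ₃ φ₆; rw [hScyc1]; ring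
    have hc15C : c * φ₁₅ c a b = Real.sqrt 3 * (c * φ₃ c a b) + 4 * S * (c * φ₆ c a b) := by
      unfold φ₁₅ φ₃ φ₆; rw [hScyc2]; ring
    rw [hc15A, hc15B, hc15C]
    match_scalars <;> (field_simp; ring)
  refine ⟨hpart1, hmid, ?_⟩
  rw [collinear_iff_of_mem (Set.mem_insert _ _)]
  refine ⟨centerPoint φ₆ A B C a b c - centerPoint φ₃ A B C a b c, ?_⟩
  intro p hp
  rcases hp with rfl | rfl | rfl
  · exact ⟨0, by simp⟩
  · exact ⟨1, by simp⟩
  · refine ⟨(a^2+b^2+c^2) / (4 * Real.sqrt 3 * S + (a^2+b^2+c^2)), ?_⟩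
    rw [hmid]
    have hsum : 4 * Real.sqrt 3 * S / (4 * Real.sqrt 3 * S + (a ^ 2 + b ^ 2 + c ^ 2))
        + (a^2+b^2+c^2) / (4 * Real.sqrt 3 * S + (a^2+b^2+c^2)) = 1 := by
      field_simp
    rw [vadd_eq_add]
    rw [smul_sub]
    have : (4 * Real.sqrt 3 * S / (4 * Real.sqrt 3 * S + (a ^ 2 + b ^ 2 + c ^ 2)))
        = 1 - (a^2+b^2+c^2) / (4 * Real.sqrt 3 * S + (a^2+b^2+c^2)) := by linarith
    rw [this]
    module
end

section
/- For the aliquot family Φ_A(t) = (0, 1−t, t) with t ≠ 1/2, the inverse under cyclic convolution is proportional to Φ_N(−t/(1−2t)), where Φ_N(s) = ((1−s)s, s², (1−s)²) is the nedian family. That is, ((1−t)t, t², (1−t)²) cyclically convolved with (0, 1−t, t), after substituting t ↦ −t/(1−2t) in the first factor, is proportional to (1,0,0). -/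
/-- Cyclic convolution of two triples of reals. -/
def cconv (x y : ℝ × ℝ × ℝ) : ℝ × ℝ × ℝ :=
  (x.1 * y.1 + x.2.1 * y.2.2 + x.2.2 * y.2.1,
   x.1 * y.2.1 + x.2.1 * y.1 + x.2.2 * y.2.2,
   x.1 * y.2.2 + x.2.1 * y.2.1 + x.2.2 * y.1)

/-- The aliquot family. -/
def ΦA (t : ℝ) : ℝ × ℝ × ℝ := (0, 1 - t, t)

/-- The nedian family. -/
def ΦN (s : ℝ) : ℝ × ℝ × ℝ := ((1 - s) * s, s ^ 2, (1 - s) ^ 2)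

theorem aliquot_inverse_nedian (t : ℝ) (ht : t ≠ 1 / 2) :
    ∃ lam : ℝ, lam ≠ 0 ∧
      cconv (ΦN (-t / (1 - 2 * t))) (ΦA t) = (lam, 0, 0) := by
  have hu : (1 - 2 * t) ≠ 0 := by intro h; apply ht; linarith
  refine ⟨(3 * t ^ 2 - 3 * t + 1) / (1 - 2 * t) ^ 2, ?_, ?_⟩
  · apply div_ne_zero
    · nlinarith [sq_nonneg (2 * t - 1)]
    · positivity
  · simp only [cconv, ΦN, ΦA, Prod.mk.injEq]
    refine ⟨?_, ?_, ?_⟩ <;> field_simp [show (1:ℝ) - t * 2 ≠ 0 by rwa [mul_comm]] <;> ring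
end

section
/- The curve L(t) = (3k/(2(1−(1−t)t)²)) · ( t(1+t−2(2−t)t²), √3·(1−t)t(1−2t) ) satisfies the Limaçon trisectrix equation k²(x²+y²) = (x²+y²−2kx)² for all t ∈ ℝ, where (x,y) = L(t). -/
theorem limacon_trisectrix (k t x y : ℝ) (hk : k ≠ 0)
    (hx : x = 3 * k / (2 * (1 - (1 - t) * t) ^ 2) *
      (t * (1 + t - 2 * (2 - t) * t ^ 2)))
    (hy : y = 3 * k / (2 * (1 - (1 - t) * t) ^ 2) *
      (Real.sqrt 3 * ((1 - t) * t * (1 - 2 * t)))) :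
    k ^ 2 * (x ^ 2 + y ^ 2) = (x ^ 2 + y ^ 2 - 2 * k * x) ^ 2 := by
  have hd : (1 - (1 - t) * t) ≠ 0 := by nlinarith [sq_nonneg (2 * t - 1)]
  have hy2 : y ^ 2 = (3 * k / (2 * (1 - (1 - t) * t) ^ 2)) ^ 2 *
      (3 * ((1 - t) * t * (1 - 2 * t)) ^ 2) := by
    rw [hy, mul_pow, mul_pow, Real.sq_sqrt (by norm_num : (3:ℝ) ≥ 0)]
  subst hx
  rw [hy2]
  have hd' : 1 - t * (1 - t) ≠ 0 := by rwa [mul_comm]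
  field_simp
  ring
end
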